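/- Let d be a positive integer, let σ be a permutation of {1,…,d}, and let h(σ) denote the number of orbits of σ on {1,…,d} (fixed points count as orbits). If τ₁, …, τᵣ are transpositions in the symmetric group S_d with τ₁⋯τᵣ = σ, and the subgroup of S_d generated by τ₁, …, τᵣ acts transitively on {1,…,d}, then there exists a unique nonnegative integer g such that r = 2g − 2 + d + h(σ). -/

import Mathlib

set_option linter.unusedSectionVars false
set_option linter.deprecated false

/-- The number of orbits of a permutation `σ` of `{1, …, d}` (encoded as `Fin d`),
where fixed points count as orbits: the number of orbits of the cyclic group
generated by `σ` acting on `Fin d`. -/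
noncomputable def numOrbits {d : ℕ} (σ : Equiv.Perm (Fin d)) : ℕ :=
  Nat.card (MulAction.orbitRel.Quotient (Subgroup.zpowers σ) (Fin d))

open Equiv Equiv.Perm

/-! ### Generic counting lemmas for quotients by setoids -/

section Counting

variable {α : Type*} [Finite α]

private def quotMap {s t : Setoid α} (hom : ∀ x y, s x y → t x y) :
    Quotient s → Quotient t :=
  Quotient.lift (fun x => Quotient.mk t x) (fun a b hab => Quotient.sound (hom a b hab))

private lemma quotMap_mk {s t : Setoid α} (hom : ∀ x y, s x y → t x y) (x : α) :
    quotMap hom (Quotient.mk s x) = Quotient.mk t x := rfl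

private lemma card_quotient_eq_card (s : Setoid α) (h : ∀ x y, s x y ↔ x = y) :
    Nat.card (Quotient s) = Nat.card α := by
  apply Nat.card_congr
  exact ⟨Quotient.lift id (fun a b hab => (h a b).1 hab), Quotient.mk s,
    fun q => Quotient.inductionOn q (fun x => rfl), fun x => rfl⟩

private lemma card_quotient_eq_one (s : Setoid α) (hne : Nonempty α) (h : ∀ x y, s x y) :
    Nat.card (Quotient s) = 1 := by
  have h1 : Subsingleton (Quotient s) :=
    ⟨fun a b => Quotient.inductionOn₂ a b fun x y => Quotient.sound (h x y)⟩
  have h2 : Nonempty (Quotient s) := Nonempty.map (Quotient.mk s) hne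
  exact Nat.card_eq_one_iff_unique.mpr ⟨h1, h2⟩

private lemma card_compl_aux {β : Type*} [Finite β] (a : β) :
    Nat.card {q : β // q ≠ a} + 1 = Nat.card β := by
  classical
  have h1 : Nat.card ({q : β // q = a} ⊕ {q : β // q ≠ a}) = Nat.card β :=
    Nat.card_congr (Equiv.sumCompl (· = a))
  rw [Nat.card_sum] at h1
  have h2 : Nat.card {q : β // q = a} = 1 := by
    apply Nat.card_eq_one_iff_unique.mpr
    exact ⟨⟨fun p q => Subtype.ext (p.2.trans q.2.symm)⟩, ⟨⟨a, rfl⟩⟩⟩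
  omega

/-- If `t` is coarser than `s`, and additionally identifies `a` and `b` which are not
`s`-related, then the quotient by `t` has at least one fewer class. -/
private lemma card_add_one_le {s t : Setoid α} (hom : ∀ x y, s x y → t x y)
    {a b : α} (hab : t a b) (hnab : ¬s a b) :
    Nat.card (Quotient t) + 1 ≤ Nat.card (Quotient s) := by
  classical
  have hsurj : Function.Surjective
      (fun q : {q : Quotient s // q ≠ Quotient.mk s a} => quotMap hom q.1) := by
    intro y
    obtain ⟨x, rfl⟩ := Quotient.exists_rep y
    by_cases hx : Quotient.mk s x = Quotient.mk s a
    · refine ⟨⟨Quotient.mk s b, fun hb => hnab (s.symm' (Quotient.exact hb))⟩, ?_⟩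
      show Quotient.mk t b = Quotient.mk t x
      have hxa : s x a := Quotient.exact hx
      exact Quotient.sound (t.trans' (t.symm' hab) (t.trans' (t.symm' (hom x a hxa))
        (t.refl x)))
    · exact ⟨⟨Quotient.mk s x, hx⟩, rfl⟩
  have h1 := Nat.card_le_card_of_surjective _ hsurj
  have h2 := card_compl_aux (Quotient.mk s a)
  omega

/-- If `t` is coarser than `s`, but every `t`-relation either comes from `s` or involves the
classes of `a` and `b`, then the quotient by `t` has at most one fewer class. -/
private lemma card_le_add_one {s t : Setoid α} (hom : ∀ x y, s x y → t x y) {a b : α}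
    (hdec : ∀ x y, t x y →
      s x y ∨ ((s x a ∨ s x b) ∧ (s y a ∨ s y b))) :
    Nat.card (Quotient s) ≤ Nat.card (Quotient t) + 1 := by
  classical
  have hinj : Function.Injective
      (fun q : {q : Quotient s // q ≠ Quotient.mk s a} => quotMap hom q.1) := by
    rintro ⟨q1, h1⟩ ⟨q2, h2⟩ h
    obtain ⟨x, rfl⟩ := Quotient.exists_rep q1
    obtain ⟨y, rfl⟩ := Quotient.exists_rep q2
    have hxy : t x y := Quotient.exact h
    apply Subtype.ext
    rcases hdec x y hxy with h' | ⟨hx', hy'⟩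
    · exact Quotient.sound h'
    · have hxb : s x b := by
        rcases hx' with h'' | h''
        · exact absurd (Quotient.sound h'') h1
        · exact h''
      have hyb : s y b := by
        rcases hy' with h'' | h''
        · exact absurd (Quotient.sound h'') h2
        · exact h''
      exact Quotient.sound (s.trans' hxb (s.symm' hyb))
  have h1 := Nat.card_le_card_of_injective _ hinj
  have h2 := card_compl_aux (Quotient.mk s a)
  omega

end Counting

/-! ### Cycle counting for permutations -/

section Cycles

variable {α : Type*} [Finite α] [DecidableEq α]

/-- The setoid whose classes are the cycles (orbits) of `π`. -/
def cycleSetoid (π : Perm α) : Setoid α :=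
  ⟨π.SameCycle, ⟨fun x => SameCycle.refl π x, SameCycle.symm, SameCycle.trans⟩⟩

lemma cycleSetoid_rel (π : Perm α) (x y : α) :
    (cycleSetoid π) x y ↔ π.SameCycle x y := Iff.rfl

/-- The number of cycles (orbits, including fixed points) of a permutation. -/
noncomputable def cyc (π : Perm α) : ℕ := Nat.card (Quotient (cycleSetoid π))

lemma cyc_one : cyc (1 : Perm α) = Nat.card α :=
  card_quotient_eq_card _ (fun _ _ => Equiv.Perm.sameCycle_one)

/-- One step of a permutation, after multiplication by a swap. -/
private lemma step_rel (π : Perm α) (a b x : α) :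
    SameCycle (swap a b * π) x (π x) ∨
      (SameCycle (swap a b * π) x a ∧ π x = b) ∨
      (SameCycle (swap a b * π) x b ∧ π x = a) := by
  have h1 : SameCycle (swap a b * π) x ((swap a b * π) x) := ⟨1, by simp⟩
  by_cases hxa : π x = a
  · right; right
    refine ⟨?_, hxa⟩
    have h2 : (swap a b * π) x = b := by
      rw [Perm.mul_apply, hxa, swap_apply_left]
    rwa [h2] at h1
  by_cases hxb : π x = b
  · right; left
    refine ⟨?_, hxb⟩
    have h2 : (swap a b * π) x = a := by
      rw [Perm.mul_apply, hxb, swap_apply_right]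
    rwa [h2] at h1
  · left
    have h2 : (swap a b * π) x = π x := by
      rw [Perm.mul_apply, swap_apply_of_ne_of_ne hxa hxb]
    rwa [h2] at h1

/-- If `a` and `b` are in the same cycle of `swap a b * π`, then the cycles of
`swap a b * π` are coarser than those of `π`. -/
private lemma sameCycle_mono (π : Perm α) {a b : α}
    (hab : SameCycle (swap a b * π) a b) :
    ∀ {x y}, SameCycle π x y → SameCycle (swap a b * π) x y := by
  have key : ∀ x, SameCycle (swap a b * π) x (π x) := by
    intro x
    rcases step_rel π a b x with h | ⟨h, he⟩ | ⟨h, he⟩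
    · exact h
    · rw [he]; exact h.trans hab
    · rw [he]; exact h.trans hab.symm
  have aux : ∀ (n : ℕ) (x), SameCycle (swap a b * π) x ((π ^ n) x) := by
    intro n
    induction n with
    | zero => intro x; simpa using SameCycle.refl (swap a b * π) x
    | succ n ih =>
      intro x
      have h2 : (π ^ (n + 1)) x = (π ^ n) (π x) := by
        rw [pow_succ, Perm.mul_apply]
      rw [h2]
      exact (key x).trans (ih (π x))
  intro x y hxy
  obtain ⟨n, -, hn⟩ := hxy.exists_pow_eq'
  rw [← hn]
  exact aux n x

/-- Decomposition of the cycles of `π` in terms of those of `swap a b * π`. -/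
private lemma sameCycle_decomp (π : Perm α) (a b : α) {x y : α} (h : SameCycle π x y) :
    SameCycle (swap a b * π) x y ∨
      ((SameCycle (swap a b * π) x a ∨ SameCycle (swap a b * π) x b) ∧
        (SameCycle (swap a b * π) y a ∨ SameCycle (swap a b * π) y b)) := by
  obtain ⟨n, -, rfl⟩ := h.exists_pow_eq'
  clear h
  induction n with
  | zero => left; simpa using SameCycle.refl (swap a b * π) x
  | succ n ih =>
    have hz : (π ^ (n + 1)) x = π ((π ^ n) x) := by
      rw [pow_succ', Perm.mul_apply]
    rw [hz]
    rcases step_rel π a b ((π ^ n) x) with h1 | ⟨h1, he⟩ | ⟨h1, he⟩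
    · rcases ih with h2 | ⟨hx2, hy2⟩
      · left; exact h2.trans h1
      · right
        refine ⟨hx2, ?_⟩
        rcases hy2 with h3 | h3
        · exact Or.inl ((h1.symm).trans h3)
        · exact Or.inr ((h1.symm).trans h3)
    · rw [he]
      right
      refine ⟨?_, Or.inr (SameCycle.refl _ _)⟩
      rcases ih with h2 | ⟨hx2, -⟩
      · exact Or.inl (h2.trans h1)
      · exact hx2
    · rw [he]
      right
      refine ⟨?_, Or.inl (SameCycle.refl _ _)⟩
      rcases ih with h2 | ⟨hx2, -⟩
      · exact Or.inr (h2.trans h1)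
      · exact hx2

/-- If `a`, `b` are in different cycles of `π`, they are in the same cycle of
`swap a b * π`. -/
private lemma sameCycle_swap_mul_of_not (π : Perm α) {a b : α} (h : ¬SameCycle π a b) :
    SameCycle (swap a b * π) a b := by
  classical
  have hex : ∃ n, 0 < n ∧ (π ^ n) b = b :=
    ⟨orderOf π, orderOf_pos π, by simp [pow_orderOf_eq_one]⟩
  have hm1 := Nat.find_spec hex
  set m := Nat.find hex with hmdef
  have key : ∀ j, j < m → SameCycle (swap a b * π) b ((π ^ j) b) := by
    intro j
    induction j with
    | zero => intro _; simpa using SameCycle.refl (swap a b * π) b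
    | succ j ih =>
      intro hj
      have hjm : j < m := lt_trans (Nat.lt_succ_self j) hj
      have h1 := ih hjm
      have hne_b : (π ^ (j + 1)) b ≠ b := by
        intro hb
        exact Nat.find_min hex hj ⟨Nat.succ_pos j, hb⟩
      have hne_a : (π ^ (j + 1)) b ≠ a := by
        intro ha
        apply h
        have hba : SameCycle π b a := ⟨((j + 1 : ℕ) : ℤ), by rwa [zpow_natCast]⟩
        exact hba.symm
      have hstep : (swap a b * π) ((π ^ j) b) = (π ^ (j + 1)) b := by
        rw [Perm.mul_apply]
        have h2 : π ((π ^ j) b) = (π ^ (j + 1)) b := by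
          rw [pow_succ', Perm.mul_apply]
        rw [h2, swap_apply_of_ne_of_ne hne_a hne_b]
      exact h1.trans ⟨1, by rw [zpow_one]; exact hstep⟩
  have hmpos : 0 < m := hm1.1
  have hfin : (swap a b * π) ((π ^ (m - 1)) b) = a := by
    rw [Perm.mul_apply]
    have h2 : π ((π ^ (m - 1)) b) = (π ^ m) b := by
      rw [← Perm.mul_apply, ← pow_succ']
      congr 2
      omega
    rw [h2, hm1.2, swap_apply_right]
  have hlast : SameCycle (swap a b * π) b a :=
    (key (m - 1) (by omega)).trans ⟨1, by rw [zpow_one]; exact hfin⟩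
  exact hlast.symm

/-- If `a`, `b` are in the same cycle of `π` (and distinct), they are in different cycles of
`swap a b * π`. -/
private lemma not_sameCycle_swap_mul (π : Perm α) {a b : α} (hne : a ≠ b)
    (h : SameCycle π a b) : ¬SameCycle (swap a b * π) a b := by
  classical
  have hex : ∃ n : ℕ, (π ^ n) b = a := by
    obtain ⟨i, -, hi⟩ := (h.symm).exists_pow_eq'
    exact ⟨i, hi⟩
  have hmspec := Nat.find_spec hex
  set m := Nat.find hex with hmdef
  have hmpos : 0 < m := by
    rcases Nat.eq_zero_or_pos m with h0 | h0
    · exfalso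
      rw [h0, pow_zero] at hmspec
      exact hne (by simpa using hmspec.symm)
    · exact h0
  set S : Set α := {x | ∃ j, j < m ∧ (π ^ j) b = x} with hS
  have hbS : b ∈ S := ⟨0, hmpos, by simp⟩
  have haS : a ∉ S := by
    rintro ⟨j, hj, hjb⟩
    exact Nat.find_min hex hj hjb
  have hclosed : ∀ x ∈ S, (swap a b * π) x ∈ S := by
    rintro x ⟨j, hj, rfl⟩
    have hstep : (swap a b * π) ((π ^ j) b) = swap a b ((π ^ (j + 1)) b) := by
      rw [Perm.mul_apply]
      congr 1
      rw [pow_succ', Perm.mul_apply]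
    rcases eq_or_lt_of_le (Nat.succ_le_of_lt hj) with h1 | h1
    · have h1' : j + 1 = m := h1
      rw [hstep, h1', hmspec, swap_apply_left]
      exact hbS
    · have h1' : j + 1 < m := h1
      have hne_a : (π ^ (j + 1)) b ≠ a := Nat.find_min hex h1'
      have hne_b : (π ^ (j + 1)) b ≠ b := by
        intro hb
        apply Nat.find_min hex (show m - (j + 1) < m by omega)
        have h2 : (π ^ (m - (j + 1))) ((π ^ (j + 1)) b) = (π ^ m) b := by
          rw [← Perm.mul_apply, ← pow_add]
          congr 2
          omega
        rw [hb] at h2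
        rw [h2, hmspec]
      rw [hstep, swap_apply_of_ne_of_ne hne_a hne_b]
      exact ⟨j + 1, h1', rfl⟩
  intro hcon
  obtain ⟨k, -, hk⟩ := (hcon.symm).exists_pow_eq'
  have hall : ∀ n : ℕ, ((swap a b * π) ^ n) b ∈ S := by
    intro n
    induction n with
    | zero => simpa using hbS
    | succ n ih =>
      have h2 : ((swap a b * π) ^ (n + 1)) b = (swap a b * π) (((swap a b * π) ^ n) b) := by
        rw [pow_succ', Perm.mul_apply]
      rw [h2]
      exact hclosed _ ih
  exact haS (hk ▸ hall k)

/-- Merging two cycles: multiplying by a transposition of elements in different cycles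
decreases the cycle count by exactly one. -/
lemma cyc_merge (π : Perm α) {a b : α} (hne : a ≠ b) (h : ¬SameCycle π a b) :
    cyc (swap a b * π) + 1 = cyc π := by
  have hab' : SameCycle (swap a b * π) a b := sameCycle_swap_mul_of_not π h
  have hom : ∀ x y, (cycleSetoid π) x y → (cycleSetoid (swap a b * π)) x y :=
    fun x y hxy => sameCycle_mono π hab' hxy
  have le1 : cyc (swap a b * π) + 1 ≤ cyc π := card_add_one_le hom hab' h
  have le2 : cyc π ≤ cyc (swap a b * π) + 1 := by
    apply card_le_add_one hom (a := a) (b := b)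
    intro x y hxy
    have hd := sameCycle_decomp (swap a b * π) a b hxy
    rwa [← mul_assoc, swap_mul_self, one_mul] at hd
  omega

/-- Splitting a cycle: multiplying by a transposition of elements in the same cycle
increases the cycle count by exactly one. -/
lemma cyc_split (π : Perm α) {a b : α} (hne : a ≠ b) (h : SameCycle π a b) :
    cyc (swap a b * π) = cyc π + 1 := by
  have hab' : SameCycle (swap a b * (swap a b * π)) a b := by
    rwa [← mul_assoc, swap_mul_self, one_mul]
  have hom : ∀ x y, (cycleSetoid (swap a b * π)) x y → (cycleSetoid π) x y := by
    intro x y hxy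
    have h2 := sameCycle_mono (swap a b * π) hab' hxy
    rwa [← mul_assoc, swap_mul_self, one_mul] at h2
  have ge1 : cyc π + 1 ≤ cyc (swap a b * π) :=
    card_add_one_le hom h (not_sameCycle_swap_mul π hne h)
  have le1 : cyc (swap a b * π) ≤ cyc π + 1 := by
    apply card_le_add_one hom (a := a) (b := b)
    intro x y hxy
    exact sameCycle_decomp π a b hxy
  omega

end Cycles

/-! ### The connectivity setoid of a list of transpositions -/

section Edges

variable {α : Type*} [Finite α] [DecidableEq α]

/-- The setoid generated by the edges of a list of transpositions. -/
def edgeSetoid (l : List (Perm α)) : Setoid α :=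
  Relation.EqvGen.setoid (fun x y => Equiv.swap x y ∈ l)

lemma edgeSetoid_rel (l : List (Perm α)) (x y : α) :
    (edgeSetoid l) x y ↔ Relation.EqvGen (fun x y => Equiv.swap x y ∈ l) x y := Iff.rfl

lemma edgeSetoid_nil (x y : α) :
    (edgeSetoid ([] : List (Perm α))) x y ↔ x = y := by
  constructor
  · intro h
    rw [edgeSetoid_rel] at h
    induction h with
    | rel _ _ hr => exact absurd hr List.not_mem_nil
    | refl _ => rfl
    | symm _ _ _ ih => exact ih.symm
    | trans _ _ _ _ _ ih1 ih2 => exact ih1.trans ih2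
  · rintro rfl
    exact (edgeSetoid _).refl x

private lemma edgeSetoid_mono {l : List (Perm α)} (τ : Perm α) {x y : α}
    (h : (edgeSetoid l) x y) : (edgeSetoid (τ :: l)) x y := by
  rw [edgeSetoid_rel] at h ⊢
  exact Relation.EqvGen.mono (fun a b hm => List.mem_cons_of_mem _ hm) _ _ h

private lemma edgeSetoid_swap_of_mem {l : List (Perm α)} {a b : α}
    (hmem : swap a b ∈ l) : (edgeSetoid l) a b :=
  Relation.EqvGen.rel a b hmem

/-- Applying an element of the list moves points within their connectivity class. -/
private lemma edgeSetoid_rel_apply_of_mem {l : List (Perm α)} {τ : Perm α}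
    (hmem : τ ∈ l) (hτ : τ.IsSwap) (x : α) : (edgeSetoid l) x (τ x) := by
  obtain ⟨a, b, hne, rfl⟩ := hτ
  by_cases hxa : x = a
  · subst hxa
    rw [swap_apply_left]
    exact edgeSetoid_swap_of_mem hmem
  by_cases hxb : x = b
  · subst hxb
    rw [swap_apply_right]
    apply edgeSetoid_swap_of_mem
    rwa [swap_comm]
  · rw [swap_apply_of_ne_of_ne hxa hxb]

/-- Products of list elements move points within their connectivity class. -/
private lemma edgeSetoid_rel_prod (l : List (Perm α)) (hsw : ∀ τ ∈ l, τ.IsSwap) (x : α) :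
    (edgeSetoid l) x (l.prod x) := by
  induction l generalizing x with
  | nil => simpa using (edgeSetoid ([] : List (Perm α))).refl x
  | cons τ l ih =>
    have hswl : ∀ ρ ∈ l, ρ.IsSwap := fun ρ hρ => hsw ρ (List.mem_cons_of_mem _ hρ)
    have h1 : (edgeSetoid (τ :: l)) x (l.prod x) := edgeSetoid_mono τ (ih hswl x)
    have h2 : (edgeSetoid (τ :: l)) (l.prod x) (τ (l.prod x)) :=
      edgeSetoid_rel_apply_of_mem ((List.mem_cons_self (a := τ) (l := l))) (hsw τ ((List.mem_cons_self (a := τ) (l := l))))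
        (l.prod x)
    have h3 : (τ :: l).prod x = τ (l.prod x) := by
      rw [List.prod_cons, Perm.mul_apply]
    rw [h3]
    exact (edgeSetoid (τ :: l)).trans' h1 h2

/-- Cycles of the product refine the connectivity classes. -/
private lemma edgeSetoid_of_sameCycle (l : List (Perm α)) (hsw : ∀ τ ∈ l, τ.IsSwap)
    {x y : α} (h : SameCycle l.prod x y) : (edgeSetoid l) x y := by
  have aux : ∀ (n : ℕ) (x : α), (edgeSetoid l) x ((l.prod ^ n) x) := by
    intro n
    induction n with
    | zero => intro x; simpa using (edgeSetoid l).refl x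
    | succ n ih =>
      intro x
      have h2 : (l.prod ^ (n + 1)) x = (l.prod ^ n) (l.prod x) := by
        rw [pow_succ, Perm.mul_apply]
      rw [h2]
      exact (edgeSetoid l).trans' (edgeSetoid_rel_prod l hsw x) (ih (l.prod x))
  obtain ⟨n, -, hn⟩ := h.exists_pow_eq'
  rw [← hn]
  exact aux n x

/-- If the endpoints of the new transposition were already connected, the connectivity
setoid does not change. -/
private lemma edgeSetoid_cons_of_rel {l : List (Perm α)} {a b : α}
    (h : (edgeSetoid l) a b) : edgeSetoid (swap a b :: l) = edgeSetoid l := by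
  apply Setoid.ext
  intro x y
  constructor
  · intro hxy
    have hxy' : Relation.EqvGen (fun u v => Equiv.swap u v ∈ (swap a b :: l)) x y := hxy
    clear hxy
    induction hxy' with
    | rel u v hr =>
      rcases List.mem_cons.1 hr with heq | hmem
      · by_cases hua : u = a
        · have hv : v = b := by
            have h2 := congrArg (fun e => e u) heq
            simpa [hua, swap_apply_left] using h2
          rw [hua, hv]
          exact h
        by_cases hub : u = b
        · have hv : v = a := by
            have h2 := congrArg (fun e => e u) heq
            simpa [hub, swap_apply_right] using h2
          rw [hub, hv]
          exact (edgeSetoid l).symm' h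
        · have hv : v = u := by
            have h2 := congrArg (fun e => e u) heq
            simpa [swap_apply_of_ne_of_ne hua hub] using h2
          rw [hv]
      · exact Relation.EqvGen.rel u v hmem
    | refl u => exact (edgeSetoid l).refl u
    | symm u v _ ih => exact (edgeSetoid l).symm' ih
    | trans u v w _ _ ih1 ih2 => exact (edgeSetoid l).trans' ih1 ih2
  · exact edgeSetoid_mono (swap a b)

/-- Decomposition of connectivity after adding one edge. -/
private lemma edgeSetoid_cons_decomp {l : List (Perm α)} (a b : α) {x y : α}
    (h : (edgeSetoid (swap a b :: l)) x y) :
    (edgeSetoid l) x y ∨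
      (((edgeSetoid l) x a ∨ (edgeSetoid l) x b) ∧
        ((edgeSetoid l) y a ∨ (edgeSetoid l) y b)) := by
  have h' : Relation.EqvGen (fun u v => Equiv.swap u v ∈ (swap a b :: l)) x y := h
  clear h
  induction h' with
  | rel u v hr =>
    rcases List.mem_cons.1 hr with heq | hmem
    · by_cases hua : u = a
      · have hv : v = b := by
          have h2 := congrArg (fun e => e u) heq
          simpa [hua, swap_apply_left] using h2
        rw [hua, hv]
        exact Or.inr ⟨Or.inl ((edgeSetoid l).refl a), Or.inr ((edgeSetoid l).refl b)⟩
      by_cases hub : u = b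
      · have hv : v = a := by
          have h2 := congrArg (fun e => e u) heq
          simpa [hub, swap_apply_right] using h2
        rw [hub, hv]
        exact Or.inr ⟨Or.inr ((edgeSetoid l).refl b), Or.inl ((edgeSetoid l).refl a)⟩
      · have hv : v = u := by
          have h2 := congrArg (fun e => e u) heq
          simpa [swap_apply_of_ne_of_ne hua hub] using h2
        rw [hv]
        exact Or.inl ((edgeSetoid l).refl u)
    · exact Or.inl (Relation.EqvGen.rel u v hmem)
  | refl u => exact Or.inl ((edgeSetoid l).refl u)
  | symm u v _ ih =>
    rcases ih with h1 | ⟨hx1, hy1⟩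
    · exact Or.inl ((edgeSetoid l).symm' h1)
    · exact Or.inr ⟨hy1, hx1⟩
  | trans u v w _ _ ih1 ih2 =>
    rcases ih1 with h1 | ⟨hx1, hy1⟩
    · rcases ih2 with h2 | ⟨hy2, hz2⟩
      · exact Or.inl ((edgeSetoid l).trans' h1 h2)
      · refine Or.inr ⟨?_, hz2⟩
        exact hy2.imp (fun hh => (edgeSetoid l).trans' h1 hh)
          (fun hh => (edgeSetoid l).trans' h1 hh)
    · rcases ih2 with h2 | ⟨hy2, hz2⟩
      · refine Or.inr ⟨hx1, ?_⟩
        exact hy1.imp (fun hh => (edgeSetoid l).trans' ((edgeSetoid l).symm' h2) hh)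
          (fun hh => (edgeSetoid l).trans' ((edgeSetoid l).symm' h2) hh)
      · exact Or.inr ⟨hx1, hz2⟩

/-- Elements of the subgroup generated by the list move points within their
connectivity class. -/
private lemma edgeSetoid_rel_of_closure (l : List (Perm α)) (hsw : ∀ τ ∈ l, τ.IsSwap)
    (π : Perm α) (hπ : π ∈ Subgroup.closure {τ | τ ∈ l}) (x : α) :
    (edgeSetoid l) x (π x) := by
  induction hπ using Subgroup.closure_induction generalizing x with
  | mem τ hτ => exact edgeSetoid_rel_apply_of_mem hτ (hsw τ hτ) x
  | one => simpa using (edgeSetoid l).refl x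
  | mul τ ρ _ _ ihτ ihρ =>
    have h2 : (τ * ρ) x = τ (ρ x) := Perm.mul_apply τ ρ x
    rw [h2]
    exact (edgeSetoid l).trans' (ihρ x) (ihτ (ρ x))
  | inv τ _ ihτ =>
    have h2 := ihτ (τ⁻¹ x)
    rw [Perm.inv_def, Equiv.apply_symm_apply] at h2
    exact (edgeSetoid l).symm' h2

end Edges

/-! ### The two inductions -/

section Main

variable {α : Type*} [Finite α] [DecidableEq α]

/-- The key inequality: cycles of the product + points ≤ length + 2 · connectivity classes. -/
private lemma key_inequality (l : List (Perm α)) (hsw : ∀ τ ∈ l, τ.IsSwap) :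
    cyc l.prod + Nat.card α ≤ l.length + 2 * Nat.card (Quotient (edgeSetoid l)) := by
  induction l with
  | nil =>
    rw [List.prod_nil, cyc_one, card_quotient_eq_card _ (edgeSetoid_nil)]
    simp
    omega
  | cons τ l ih =>
    have hswl : ∀ ρ ∈ l, ρ.IsSwap := fun ρ hρ => hsw ρ (List.mem_cons_of_mem _ hρ)
    have ih2 := ih hswl
    obtain ⟨a, b, hne, rfl⟩ := hsw τ ((List.mem_cons_self (a := τ) (l := l)))
    rw [List.prod_cons, List.length_cons]
    by_cases hR : (edgeSetoid l) a b
    · rw [edgeSetoid_cons_of_rel hR]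
      have hc : cyc (swap a b * l.prod) ≤ cyc l.prod + 1 := by
        by_cases hsc : SameCycle l.prod a b
        · rw [cyc_split l.prod hne hsc]
        · have h2 := cyc_merge l.prod hne hsc
          omega
      omega
    · have hsc : ¬SameCycle l.prod a b := fun hsc => hR (edgeSetoid_of_sameCycle l hswl hsc)
      have hc := cyc_merge l.prod hne hsc
      have hoE : Nat.card (Quotient (edgeSetoid l)) ≤
          Nat.card (Quotient (edgeSetoid (swap a b :: l))) + 1 := by
        apply card_le_add_one (fun x y h => edgeSetoid_mono (swap a b) h) (a := a) (b := b)
        intro x y h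
        exact edgeSetoid_cons_decomp a b h
      omega

/-- The parity relation: cycles of the product + length ≡ number of points (mod 2). -/
private lemma key_parity (l : List (Perm α)) (hsw : ∀ τ ∈ l, τ.IsSwap) :
    (cyc l.prod + l.length) % 2 = Nat.card α % 2 := by
  induction l with
  | nil =>
    rw [List.prod_nil, cyc_one]
    simp
  | cons τ l ih =>
    have hswl : ∀ ρ ∈ l, ρ.IsSwap := fun ρ hρ => hsw ρ (List.mem_cons_of_mem _ hρ)
    have ih2 := ih hswl
    obtain ⟨a, b, hne, rfl⟩ := hsw τ ((List.mem_cons_self (a := τ) (l := l)))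
    rw [List.prod_cons, List.length_cons]
    by_cases hsc : SameCycle l.prod a b
    · have h2 := cyc_split l.prod hne hsc
      omega
    · have h2 := cyc_merge l.prod hne hsc
      omega

end Main

/-- `numOrbits` agrees with the cycle count. -/
lemma numOrbits_eq_cyc {d : ℕ} (σ : Equiv.Perm (Fin d)) : numOrbits σ = cyc σ := by
  have hset : MulAction.orbitRel (Subgroup.zpowers σ) (Fin d) = cycleSetoid σ := by
    apply Setoid.ext
    intro x y
    rw [MulAction.orbitRel_apply, MulAction.mem_orbit_iff]
    constructor
    · rintro ⟨⟨g, hg⟩, h⟩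
      obtain ⟨k, rfl⟩ := Subgroup.mem_zpowers_iff.1 hg
      have h2 : (σ ^ k) y = x := h
      exact (show SameCycle σ y x from ⟨k, h2⟩).symm
    · rintro ⟨k, hk⟩
      refine ⟨⟨σ ^ (-k), Subgroup.zpow_mem _ (Subgroup.mem_zpowers σ) _⟩, ?_⟩
      show (σ ^ (-k)) y = x
      rw [← hk]
      simp [zpow_neg]
  rw [numOrbits, MulAction.orbitRel.Quotient, hset, cyc]

/-- If `τ₁, …, τᵣ` are transpositions in `S_d` with `τ₁ ⋯ τᵣ = σ` which generate a
subgroup acting transitively on `{1, …, d}`, then there is a unique nonnegative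
integer `g` with `r = 2g - 2 + d + h(σ)`. -/
theorem exists_unique_genus_of_transitive_transposition_factorization
    (d : ℕ) (hd : 0 < d) (σ : Equiv.Perm (Fin d))
    (l : List (Equiv.Perm (Fin d)))
    (hswap : ∀ τ ∈ l, τ.IsSwap)
    (hprod : l.prod = σ)
    (htrans : ∀ i j : Fin d, ∃ π ∈ Subgroup.closure {τ | τ ∈ l}, π i = j) :
    ∃! g : ℕ, (l.length : ℤ) = 2 * (g : ℤ) - 2 + d + numOrbits σ := by
  have hcard : Nat.card (Fin d) = d := by simp
  have hNE : Nonempty (Fin d) := ⟨⟨0, hd⟩⟩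
  have hone : ∀ x y : Fin d, (edgeSetoid l) x y := by
    intro x y
    obtain ⟨π, hπ, hπx⟩ := htrans x y
    rw [← hπx]
    exact edgeSetoid_rel_of_closure l hswap π hπ x
  have hoE1 : Nat.card (Quotient (edgeSetoid l)) = 1 :=
    card_quotient_eq_one _ hNE hone
  have hineq := key_inequality l hswap
  have hpar := key_parity l hswap
  rw [hprod, hoE1, hcard] at hineq
  rw [hprod, hcard] at hpar
  have hnum : numOrbits σ = cyc σ := numOrbits_eq_cyc σ
  refine ⟨(l.length + 2 - d - numOrbits σ) / 2, ?_, ?_⟩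
  · have key : l.length + 2 = 2 * ((l.length + 2 - d - numOrbits σ) / 2) + d + numOrbits σ := by
      omega
    omega
  · intro g' hg'
    have key : l.length + 2 = 2 * ((l.length + 2 - d - numOrbits σ) / 2) + d + numOrbits σ := by
      omega
    omega
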